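/- Let R ⊂ ℝ² and let P ⊂ R be a set at no point of which the contingent of R is the whole plane, i.e. for every x ∈ P there is a unit vector in ℝ² that is not a limit direction of R at x. Then P has σ-finite H^1 measure. -/

import Mathlib

open MeasureTheory Metric Set Filter
open scoped ENNReal NNReal Topology RealInnerProductSpace

noncomputable section

/-- A unit vector `d` is a limit direction of `A` at `x`: there is a sequence of points of
`A \ {x}` converging to `x` whose normalized directions from `x` converge to `d`. -/
def IsLimitDirection {E : Type*} [NormedAddCommGroup E] [NormedSpace ℝ E]
    (A : Set E) (x d : E) : Prop :=
  ‖d‖ = 1 ∧ ∃ y : ℕ → E, (∀ k, y k ∈ A ∧ y k ≠ x) ∧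
    Tendsto y atTop (𝓝 x) ∧
    Tendsto (fun k => (‖y k - x‖)⁻¹ • (y k - x)) atTop (𝓝 d)

/-- `A` has a tangent line at `x`: the set of limit directions of `A` at `x` is `{v, -v}`
for some unit vector `v`. -/
def HasTangentLineAt {E : Type*} [NormedAddCommGroup E] [NormedSpace ℝ E]
    (A : Set E) (x : E) : Prop :=
  ∃ v : E, ‖v‖ = 1 ∧ {d | IsLimitDirection A x d} = {v, -v}

/-- Lower scaled oscillation of `f` at `x`, where `f` is regarded as a map defined on the
metric space `A`:  `liminf_{r→0+} (sup_{y ∈ A, dist x y ≤ r} ‖f y - f x‖) / r`. -/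
def lOscOn {E F : Type*} [PseudoMetricSpace E] [NormedAddCommGroup F]
    (f : E → F) (A : Set E) (x : E) : ℝ≥0∞ :=
  Filter.liminf
    (fun r : ℝ => (⨆ y ∈ {y ∈ A | dist x y ≤ r}, (‖f y - f x‖₊ : ℝ≥0∞)) / ENNReal.ofReal r)
    (𝓝[>] (0:ℝ))

/-- Upper scaled oscillation of `f` at `x`, where `f` is regarded as a map defined on the
metric space `A`:  `limsup_{r→0+} (sup_{y ∈ A, dist x y ≤ r} ‖f y - f x‖) / r`. -/
def uOscOn {E F : Type*} [PseudoMetricSpace E] [NormedAddCommGroup F]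
    (f : E → F) (A : Set E) (x : E) : ℝ≥0∞ :=
  Filter.limsup
    (fun r : ℝ => (⨆ y ∈ {y ∈ A | dist x y ≤ r}, (‖f y - f x‖₊ : ℝ≥0∞)) / ENNReal.ofReal r)
    (𝓝[>] (0:ℝ))

/-- The closed unit cube `[0,1]^n` in `ℝ^n`. -/
def unitCube (n : ℕ) : Set (EuclideanSpace ℝ (Fin n)) :=
  {x | ∀ i, x i ∈ Set.Icc (0:ℝ) 1}

/-- A set has σ-finite `s`-dimensional Hausdorff measure if it is a countable union of
sets of finite `H^s` measure. -/
def SigmaFiniteH {E : Type*} [EMetricSpace E] [MeasurableSpace E] [BorelSpace E]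
    (s : ℝ) (C : Set E) : Prop :=
  ∃ F : ℕ → Set E, C = ⋃ k, F k ∧ ∀ k, μH[s] (F k) < ⊤

/-- The Hausdorff measure associated to a gauge function `g`. -/
def gaugeHausdorff {E : Type*} [EMetricSpace E] [MeasurableSpace E] [BorelSpace E]
    (g : ℝ → ℝ) : Measure E :=
  Measure.mkMetric (fun d : ℝ≥0∞ => ENNReal.ofReal (g d.toReal))

/-- The hyperplane through `x` with normal vector `θ`. -/
def hyperplaneThrough {E : Type*} [NormedAddCommGroup E] [InnerProductSpace ℝ E]
    (θ x : E) : Set E := {y | ⟪y - x, θ⟫ = 0}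

/-- `x` is an isolated point of `A`. -/
def IsIsolatedIn {E : Type*} [PseudoMetricSpace E] (x : E) (A : Set E) : Prop :=
  x ∈ A ∧ ∃ r > 0, A ∩ Metric.ball x r = {x}

/-- Concatenation of two Euclidean vectors as a point of `ℝ^{n+m}`. -/
def concatPt {n m : ℕ} (x : EuclideanSpace ℝ (Fin n)) (y : EuclideanSpace ℝ (Fin m)) :
    EuclideanSpace ℝ (Fin (n + m)) :=
  (EuclideanSpace.equiv (Fin (n + m)) ℝ).symm (Fin.append (fun i => x i) (fun j => y j))

/-- A point of `ℝ^{n+1}` given by a vector in `ℝ^n` and a last (vertical) coordinate. -/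
def snocPt {n : ℕ} (x : EuclideanSpace ℝ (Fin n)) (t : ℝ) :
    EuclideanSpace ℝ (Fin (n + 1)) :=
  (EuclideanSpace.equiv (Fin (n + 1)) ℝ).symm (Fin.snoc (fun i => x i) t)


/-! ### Auxiliary material for `stmt_3` -/

abbrev E2' := EuclideanSpace ℝ (Fin 2)

def perp2 (w : E2') : E2' := (EuclideanSpace.equiv (Fin 2) ℝ).symm ![-(w 1), w 0]

lemma inner2 (v w : E2') : ⟪v, w⟫ = v 0 * w 0 + v 1 * w 1 := by
  rw [PiLp.inner_apply]
  simp [RCLike.inner_apply, Fin.sum_univ_two]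
  ring

lemma norm2_sq (v : E2') : ‖v‖ ^ 2 = v 0 ^ 2 + v 1 ^ 2 := by
  rw [← real_inner_self_eq_norm_sq, inner2]; ring

lemma pythag2 (v w : E2') (hw : ‖w‖ = 1) :
    ⟪v, w⟫ ^ 2 + ⟪v, perp2 w⟫ ^ 2 = ‖v‖ ^ 2 := by
  have h4 : w 0 ^ 2 + w 1 ^ 2 = 1 := by rw [← norm2_sq, hw]; norm_num
  rw [inner2, inner2, norm2_sq]
  show _ + (v 0 * (-(w 1)) + v 1 * (w 0))^2 = _
  nlinarith [h4]

lemma exists_cone {E : Type*} [NormedAddCommGroup E] [NormedSpace ℝ E]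
    {R : Set E} {x d : E} (hd : ‖d‖ = 1) (hnl : ¬ IsLimitDirection R x d) :
    ∃ ε > 0, ∃ r > 0, ∀ y ∈ R, y ≠ x → ‖y - x‖ < r →
      ε ≤ ‖(‖y - x‖)⁻¹ • (y - x) - d‖ := by
  by_contra hcon
  push_neg at hcon
  apply hnl
  refine ⟨hd, ?_⟩
  have H : ∀ k : ℕ, ∃ y, y ∈ R ∧ y ≠ x ∧ ‖y - x‖ < 1 / ((k:ℝ)+1) ∧
      ‖(‖y - x‖)⁻¹ • (y - x) - d‖ < 1 / ((k:ℝ)+1) := by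
    intro k
    have hk : (0:ℝ) < 1 / ((k:ℝ)+1) := by positivity
    obtain ⟨y, hyR, hyx, hlt, hcone⟩ := hcon _ hk _ hk
    exact ⟨y, hyR, hyx, hlt, hcone⟩
  choose y hyR hyx hlt hcone using H
  refine ⟨y, fun k => ⟨hyR k, hyx k⟩, ?_, ?_⟩
  · rw [tendsto_iff_dist_tendsto_zero]
    refine squeeze_zero (fun k => dist_nonneg) (fun k => ?_)
      tendsto_one_div_add_atTop_nhds_zero_nat
    rw [dist_eq_norm]
    exact (hlt k).le
  · rw [tendsto_iff_dist_tendsto_zero]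
    refine squeeze_zero (fun k => dist_nonneg) (fun k => ?_)
      tendsto_one_div_add_atTop_nhds_zero_nat
    rw [dist_eq_norm]
    exact (hcone k).le

lemma finite_H1_of_sep {S : Set E2'} {z e : E2'} {ρ c : ℝ} (hc : 0 < c)
    (hb : S ⊆ Metric.closedBall z ρ)
    (hsep : ∀ x ∈ S, ∀ y ∈ S, c * dist x y ≤ |⟪x - y, e⟫|) :
    μH[1] S < ⊤ := by
  classical
  set f : E2' → ℝ := fun x => ⟪x, e⟫ with hf
  have hfd : ∀ x y : E2', dist (f x) (f y) = |⟪x - y, e⟫| := by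
    intro x y
    rw [Real.dist_eq]
    congr 1
    simp [hf, inner_sub_left]
  have hdist : ∀ x ∈ S, ∀ y ∈ S, c * dist x y ≤ dist (f x) (f y) := by
    intro x hx y hy
    rw [hfd]
    exact hsep x hx y hy
  set g : ℝ → E2' := fun t => if h : ∃ x, x ∈ S ∧ f x = t then h.choose else z with hg
  have hg1 : ∀ t, (h : ∃ x, x ∈ S ∧ f x = t) → g t ∈ S ∧ f (g t) = t := by
    intro t ht
    simp only [hg, dif_pos ht]
    exact ht.choose_spec
  have hginj : ∀ x ∈ S, g (f x) = x := by
    intro x hx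
    obtain ⟨hgS, hgf⟩ := hg1 (f x) ⟨x, hx, rfl⟩
    have h1 := hdist _ hgS _ hx
    rw [hgf, dist_self] at h1
    have h2 : dist (g (f x)) x ≤ 0 := by nlinarith [dist_nonneg (x := g (f x)) (y := x)]
    exact eq_of_dist_eq_zero (le_antisymm h2 dist_nonneg)
  have himg : g '' (f '' S) = S := by
    apply Set.Subset.antisymm
    · rintro _ ⟨t, ⟨x, hx, rfl⟩, rfl⟩
      rw [hginj x hx]; exact hx
    · intro x hx
      exact ⟨f x, ⟨x, hx, rfl⟩, hginj x hx⟩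
  have hK : LipschitzOnWith (Real.toNNReal c⁻¹) g (f '' S) := by
    rw [lipschitzOnWith_iff_dist_le_mul]
    rintro _ ⟨xt, hxt, rfl⟩ _ ⟨xs, hxs, rfl⟩
    rw [hginj _ hxt, hginj _ hxs, Real.coe_toNNReal _ (by positivity)]
    rw [inv_mul_eq_div, le_div_iff₀ hc, mul_comm]
    exact hdist _ hxt _ hxs
  have h1 : μH[1] S ≤ ((Real.toNNReal c⁻¹ : ℝ≥0) : ℝ≥0∞) ^ (1:ℝ) * μH[1] (f '' S) := by
    conv_lhs => rw [← himg]
    exact hK.hausdorffMeasure_image_le zero_le_one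
  have h2 : μH[1] (f '' S) < ⊤ := by
    have hsub : f '' S ⊆ Metric.closedBall (f z) (ρ * ‖e‖) := by
      rintro _ ⟨x, hx, rfl⟩
      have hb' : ‖x - z‖ ≤ ρ := by
        have := hb hx
        rwa [Metric.mem_closedBall, dist_eq_norm] at this
      rw [Metric.mem_closedBall, hfd]
      calc |⟪x - z, e⟫| ≤ ‖x - z‖ * ‖e‖ := abs_real_inner_le_norm _ _
        _ ≤ ρ * ‖e‖ := mul_le_mul_of_nonneg_right hb' (norm_nonneg _)
    calc μH[1] (f '' S) ≤ μH[1] (Metric.closedBall (f z) (ρ * ‖e‖)) :=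
          measure_mono hsub
      _ = volume (Metric.closedBall (f z) (ρ * ‖e‖)) := by
          rw [MeasureTheory.hausdorffMeasure_real]
      _ < ⊤ := measure_closedBall_lt_top
  refine lt_of_le_of_lt h1 (ENNReal.mul_lt_top ?_ h2)
  simp [ENNReal.rpow_one]

lemma sep_abstract {S : Set E2'} {w : E2'} (hw : ‖w‖ = 1) {ε : ℝ} (hε0 : 0 < ε)
    (hcone : ∀ x ∈ S, ∀ y ∈ S, y ≠ x → ε ≤ ‖(‖y - x‖)⁻¹ • (y - x) - w‖) :
    ∀ x ∈ S, ∀ y ∈ S,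
      Real.sqrt (1 - (1 - ε ^ 2 / 2) ^ 2) * dist x y ≤ |⟪x - y, perp2 w⟫| := by
  intro x hx y hy
  rcases eq_or_ne x y with rfl | hxy
  · simp
  have hv : x - y ≠ 0 := sub_ne_zero.mpr hxy
  have hvpos : 0 < ‖x - y‖ := norm_pos_iff.mpr hv
  set v := x - y with hvdef
  set u : E2' := (‖v‖)⁻¹ • v with hu
  have hun : ‖u‖ = 1 := by
    rw [hu, norm_smul, norm_inv, norm_norm, inv_mul_cancel₀ hvpos.ne']
  have h1 : ε ≤ ‖u - w‖ := hcone y hy x hx hxy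
  have h2 : ε ≤ ‖u + w‖ := by
    have hc := hcone x hx y hy (Ne.symm hxy)
    have hyx : y - x = -v := by rw [hvdef]; abel
    rw [hyx, norm_neg] at hc
    have hc2 : ε ≤ ‖-u - w‖ := by
      rw [hu]
      convert hc using 3
      rw [smul_neg]
    rwa [show -u - w = -(u + w) by abel, norm_neg] at hc2
  have hsq1 : ε ^ 2 ≤ ‖u - w‖ ^ 2 := pow_le_pow_left₀ hε0.le h1 2
  have hsq2 : ε ^ 2 ≤ ‖u + w‖ ^ 2 := pow_le_pow_left₀ hε0.le h2 2
  rw [norm_sub_sq_real, hun, hw] at hsq1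
  rw [norm_add_sq_real, hun, hw] at hsq2
  have hiw : |⟪u, w⟫| ≤ 1 - ε ^ 2 / 2 := by
    rw [abs_le]; constructor <;> nlinarith
  have hpy := pythag2 u w hw
  rw [hun] at hpy
  have hup : 1 - (1 - ε ^ 2 / 2) ^ 2 ≤ ⟪u, perp2 w⟫ ^ 2 := by
    nlinarith [sq_abs (⟪u, w⟫), hiw, abs_nonneg (⟪u, w⟫)]
  have hs : Real.sqrt (1 - (1 - ε ^ 2 / 2) ^ 2) ≤ |⟪u, perp2 w⟫| := by
    calc Real.sqrt (1 - (1 - ε ^ 2 / 2) ^ 2) ≤ Real.sqrt (⟪u, perp2 w⟫ ^ 2) :=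
          Real.sqrt_le_sqrt hup
      _ = |⟪u, perp2 w⟫| := Real.sqrt_sq_eq_abs _
  have hvi : |⟪u, perp2 w⟫| = (‖v‖)⁻¹ * |⟪v, perp2 w⟫| := by
    rw [hu, real_inner_smul_left, abs_mul, abs_inv, abs_norm]
  rw [hvi] at hs
  rw [dist_eq_norm, ← hvdef]
  calc Real.sqrt (1 - (1 - ε ^ 2 / 2) ^ 2) * ‖v‖ ≤ ((‖v‖)⁻¹ * |⟪v, perp2 w⟫|) * ‖v‖ :=
        mul_le_mul_of_nonneg_right hs (norm_nonneg _)
    _ = |⟪v, perp2 w⟫| := by field_simp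

/-- If at no point of `P ⊆ R ⊆ ℝ²` the contingent of `R` is the whole plane,
then `P` has σ-finite `H^1` measure. -/
theorem stmt_3 (R P : Set (EuclideanSpace ℝ (Fin 2))) (hPR : P ⊆ R)
    (h : ∀ x ∈ P, ∃ d : EuclideanSpace ℝ (Fin 2), ‖d‖ = 1 ∧ ¬ IsLimitDirection R x d) :
    SigmaFiniteH 1 P := by
  classical
  haveI hne : Nonempty (Metric.sphere (0:E2') 1) :=
    ⟨⟨EuclideanSpace.single 0 1, by
      rw [mem_sphere_zero_iff_norm, EuclideanSpace.norm_single]; norm_num⟩⟩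
  set w : ℕ → Metric.sphere (0:E2') 1 := TopologicalSpace.denseSeq _ with hwdef
  have hwdense : DenseRange w := TopologicalSpace.denseRange_denseSeq _
  set q : ℕ → E2' := TopologicalSpace.denseSeq _ with hqdef
  have hqdense : DenseRange q := TopologicalSpace.denseRange_denseSeq _
  have hwnorm : ∀ i, ‖(w i : E2')‖ = 1 := fun i =>
    mem_sphere_zero_iff_norm.mp (w i).2
  set Q : ℕ → ℕ → ℕ → Set E2' := fun n i j =>
    {x | x ∈ P ∧ dist x (q j) ≤ (4*((n:ℝ)+1))⁻¹ ∧
      ∀ y ∈ R, y ≠ x → ‖y - x‖ < ((n:ℝ)+1)⁻¹ →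
        (2*((n:ℝ)+1))⁻¹ ≤ ‖(‖y - x‖)⁻¹ • (y - x) - (w i : E2')‖} with hQdef
  have hQP : ∀ n i j, Q n i j ⊆ P := fun n i j x hx => hx.1
  -- finiteness of the pieces
  have hQfin : ∀ n i j, μH[1] (Q n i j) < ⊤ := by
    intro n i j
    set ε : ℝ := (2*((n:ℝ)+1))⁻¹ with hεdef
    have hn1 : (0:ℝ) < (n:ℝ) + 1 := by positivity
    have hε0 : 0 < ε := by positivity
    have hε1 : ε ≤ 1 := by
      rw [hεdef, inv_le_one_iff₀]
      right; nlinarith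
    have hcone : ∀ x ∈ Q n i j, ∀ y ∈ Q n i j, y ≠ x →
        ε ≤ ‖(‖y - x‖)⁻¹ • (y - x) - (w i : E2')‖ := by
      intro x hx y hy hyx
      apply hx.2.2 y (hPR hy.1) hyx
      have hd1 : dist y (q j) ≤ (4*((n:ℝ)+1))⁻¹ := hy.2.1
      have hd2 : dist x (q j) ≤ (4*((n:ℝ)+1))⁻¹ := hx.2.1
      have htri : dist y x ≤ dist y (q j) + dist x (q j) := dist_triangle_right _ _ _
      rw [← dist_eq_norm]
      have h4 : (4*((n:ℝ)+1))⁻¹ + (4*((n:ℝ)+1))⁻¹ < ((n:ℝ)+1)⁻¹ := by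
        rw [show (4*((n:ℝ)+1))⁻¹ + (4*((n:ℝ)+1))⁻¹ = (2*((n:ℝ)+1))⁻¹ by
          rw [← two_mul]
          rw [show (4:ℝ)*((n:ℝ)+1) = 2*(2*((n:ℝ)+1)) by ring]
          rw [mul_inv]
          rw [← mul_assoc, mul_inv_cancel₀ (two_ne_zero), one_mul]]
        rw [inv_lt_inv₀ (by positivity) (by positivity)]
        nlinarith
      linarith
    have hcpos : 0 < Real.sqrt (1 - (1 - ε ^ 2 / 2) ^ 2) := by
      apply Real.sqrt_pos.mpr
      have ht1 : 0 < ε ^ 2 := by positivity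
      have ht2 : ε ^ 2 ≤ 1 := pow_le_one₀ hε0.le hε1
      nlinarith [ht1, ht2]
    exact finite_H1_of_sep hcpos (fun x hx => Metric.mem_closedBall.mpr hx.2.1)
      (sep_abstract (hwnorm i) hε0 hcone)
  -- the pieces cover P
  have hcover : ∀ x ∈ P, ∃ n i j, x ∈ Q n i j := by
    intro x hx
    obtain ⟨d, hd, hnl⟩ := h x hx
    obtain ⟨ε, hε, r, hr, hcone⟩ := exists_cone hd hnl
    obtain ⟨n, hn⟩ := exists_nat_one_div_lt (show (0:ℝ) < min ε r from lt_min hε hr)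
    have hn1 : (0:ℝ) < (n:ℝ) + 1 := by positivity
    have hδ : (0:ℝ) < (4*((n:ℝ)+1))⁻¹ := by positivity
    obtain ⟨i, hi⟩ := hwdense.exists_dist_lt
      (⟨d, mem_sphere_zero_iff_norm.mpr hd⟩ : Metric.sphere (0:E2') 1) hδ
    obtain ⟨j, hj⟩ := hqdense.exists_dist_lt x hδ
    have hid : dist d ((w i : E2')) < (4*((n:ℝ)+1))⁻¹ := by
      have hh := hi
      rw [Subtype.dist_eq] at hh
      exact hh
    refine ⟨n, i, j, hx, hj.le, ?_⟩
    intro y hyR hyx hlt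
    have hltr : ‖y - x‖ < r :=
      calc ‖y - x‖ < ((n:ℝ)+1)⁻¹ := hlt
        _ = 1 / ((n:ℝ)+1) := (one_div _).symm
        _ < min ε r := hn
        _ ≤ r := min_le_right _ _
    have hc := hcone y hyR hyx hltr
    have htr := dist_triangle ((‖y - x‖)⁻¹ • (y - x)) ((w i : E2')) d
    rw [dist_eq_norm, dist_eq_norm, dist_eq_norm] at htr
    have hwd : ‖(w i : E2') - d‖ < (4*((n:ℝ)+1))⁻¹ := by
      rw [← dist_eq_norm, dist_comm]
      exact hid
    have harith : (2*((n:ℝ)+1))⁻¹ + (4*((n:ℝ)+1))⁻¹ ≤ 1/((n:ℝ)+1) := by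
      have key : ∀ t : ℝ, 0 < t → (2*t)⁻¹ + (4*t)⁻¹ ≤ 1/t := by
        intro t ht
        rw [mul_inv, mul_inv, one_div]
        have h1 : 0 < t⁻¹ := inv_pos.mpr ht
        nlinarith [h1]
      exact key _ hn1
    have hεmin : 1/((n:ℝ)+1) < ε := hn.trans_le (min_le_left _ _)
    linarith
  -- assemble
  set e3 : ℕ × ℕ × ℕ ≃ ℕ := Denumerable.eqv (ℕ × ℕ × ℕ) with he3
  refine ⟨fun k => Q (e3.symm k).1 (e3.symm k).2.1 (e3.symm k).2.2, ?_, fun k => hQfin _ _ _⟩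
  apply Set.Subset.antisymm
  · intro x hx
    obtain ⟨n, i, j, hnij⟩ := hcover x hx
    refine Set.mem_iUnion.mpr ⟨e3 (n, i, j), ?_⟩
    simpa [Equiv.symm_apply_apply] using hnij
  · exact Set.iUnion_subset fun k => hQP _ _ _

end
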